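/- For every t ∈ [-1,1), τ_n''(1,t) = n²(n²-1)/3 - 2·((1+t)/(1-t))·n² + 2·((1+t)/(1-t)²)·(1 - T_n(t)), where derivatives are in x and τ_n(x,t) = ((1-xt)/(x-t))·(T_n(x)-T_n(t)). -/

import Mathlib

open Polynomial Polynomial.Chebyshev

lemma U_eval_one (m : ℤ) : (U ℝ m).eval 1 = m + 1 := by
  induction m using Polynomial.Chebyshev.induct with
  | zero => simp
  | one => simp [U_one]; norm_num
  | add_two n ih1 ih2 =>
      have h := U_add_two ℝ n
      have := congrArg (Polynomial.eval (1:ℝ)) h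
      simp only [eval_sub, eval_mul, eval_ofNat, eval_X] at this
      rw [this, ih1, ih2]; push_cast; ring
  | neg_add_one n ih1 ih2 =>
      have h := U_sub_one ℝ (-n)
      have := congrArg (Polynomial.eval (1:ℝ)) h
      simp only [eval_sub, eval_mul, eval_ofNat, eval_X] at this
      rw [show (-(n:ℤ) - 1) = (-(n:ℤ)) - 1 by ring, this, ih1, ih2]; push_cast; ring

lemma dU_eval_one (m : ℤ) : (derivative (U ℝ m)).eval 1 = m * (m + 1) * (m + 2) / 3 := by
  induction m using Polynomial.Chebyshev.induct with
  | zero => simp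
  | one => simp [U_one]; norm_num
  | add_two n ih1 ih2 =>
      have h := congrArg derivative (U_add_two ℝ n)
      simp only [derivative_sub, derivative_mul, derivative_ofNat, derivative_X] at h
      have := congrArg (Polynomial.eval (1:ℝ)) h
      simp only [eval_sub, eval_add, eval_mul, eval_ofNat, eval_X, eval_zero, eval_one] at this
      rw [this, ih1, ih2, _root_.U_eval_one]; push_cast; ring
  | neg_add_one n ih1 ih2 =>
      have h := congrArg derivative (U_sub_one ℝ (-n))
      simp only [derivative_sub, derivative_mul, derivative_ofNat, derivative_X] at h
      have := congrArg (Polynomial.eval (1:ℝ)) h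
      simp only [eval_sub, eval_add, eval_mul, eval_ofNat, eval_X, eval_zero, eval_one] at this
      rw [show (-(n:ℤ) - 1) = (-(n:ℤ)) - 1 by ring, this, ih1, ih2, _root_.U_eval_one]
      push_cast; ring

lemma T_eval_one (m : ℤ) : (T ℝ m).eval 1 = 1 := by
  induction m using Polynomial.Chebyshev.induct with
  | zero => simp
  | one => simp
  | add_two n ih1 ih2 =>
      have := congrArg (Polynomial.eval (1:ℝ)) (T_add_two ℝ n)
      simp only [eval_sub, eval_mul, eval_ofNat, eval_X] at this
      rw [this, ih1, ih2]; ring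
  | neg_add_one n ih1 ih2 =>
      have := congrArg (Polynomial.eval (1:ℝ)) (T_sub_one ℝ (-n))
      simp only [eval_sub, eval_mul, eval_ofNat, eval_X] at this
      rw [show (-(n:ℤ) - 1) = (-(n:ℤ)) - 1 by ring, this, ih1, ih2]; ring

lemma dT_eval_one (m : ℤ) : (derivative (T ℝ m)).eval 1 = (m : ℝ) ^ 2 := by
  rw [T_derivative_eq_U]
  simp only [eval_mul, eval_intCast, _root_.U_eval_one]
  push_cast; ring

lemma ddT_eval_one (m : ℤ) :
    (derivative (derivative (T ℝ m))).eval 1 = (m : ℝ) ^ 2 * ((m : ℝ) ^ 2 - 1) / 3 := by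
  rw [T_derivative_eq_U]
  have : derivative ((m : ℝ[X]) * U ℝ (m - 1)) = (m : ℝ[X]) * derivative (U ℝ (m - 1)) := by
    rw [derivative_mul]
    simp
  rw [this]
  simp only [eval_mul, eval_intCast, dU_eval_one]
  push_cast; ring

/-- Chebyshev polynomial of the first kind, as a real function. -/
noncomputable def Tch (n : ℕ) (x : ℝ) : ℝ := (Polynomial.Chebyshev.T ℝ n).eval x

theorem stmt_12 (n : ℕ) (hn : 1 ≤ n) (t : ℝ) (ht : t ∈ Set.Ico (-1 : ℝ) 1) :
    deriv (deriv (fun y : ℝ => (1 - y * t) / (y - t) * (Tch n y - Tch n t))) 1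
      = (n : ℝ) ^ 2 * ((n : ℝ) ^ 2 - 1) / 3
        - 2 * ((1 + t) / (1 - t)) * (n : ℝ) ^ 2
        + 2 * ((1 + t) / (1 - t) ^ 2) * (1 - Tch n t) := by
  obtain ⟨ht1, ht2⟩ := ht
  set P : Polynomial ℝ := Polynomial.Chebyshev.T ℝ n with hP
  set c : ℝ := Tch n t with hc
  let F : ℝ → ℝ := fun y =>
    (t ^ 2 - 1) / (y - t) ^ 2 * (P.eval y - c) + (1 - y * t) / (y - t) * (derivative P).eval y
  have hF : F = fun y =>
    (t ^ 2 - 1) / (y - t) ^ 2 * (P.eval y - c) + (1 - y * t) / (y - t) * (derivative P).eval y := rfl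
  have hopen : IsOpen {y : ℝ | y ≠ t} := isOpen_ne
  have h1t : (1 : ℝ) ≠ t := fun h => absurd (h ▸ ht2) (lt_irrefl _)
  -- f has derivative F y at each y ≠ t
  have key : ∀ y : ℝ, y ≠ t →
      HasDerivAt (fun y : ℝ => (1 - y * t) / (y - t) * (Tch n y - Tch n t)) (F y) y := by
    intro y hy
    have hyt : y - t ≠ 0 := sub_ne_zero.mpr hy
    have hnum : HasDerivAt (fun y : ℝ => 1 - y * t) (-t) y := by
      simpa using ((hasDerivAt_id y).mul_const t).const_sub 1
    have hden : HasDerivAt (fun y : ℝ => y - t) 1 y := by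
      simpa using (hasDerivAt_id y).sub_const t
    have hg := hnum.div hden hyt
    have hh : HasDerivAt (fun y : ℝ => Tch n y - Tch n t) ((derivative P).eval y) y := by
      simpa [Tch, hP] using (P.hasDerivAt y).sub_const c
    have := hg.mul hh
    refine this.congr_deriv ?_
    simp only [hF, Tch, hP, hc, Pi.div_apply]
    ring
  -- deriv f = F eventually near 1
  have hev : deriv (fun y : ℝ => (1 - y * t) / (y - t) * (Tch n y - Tch n t)) =ᶠ[nhds 1] F := by
    filter_upwards [hopen.mem_nhds (by simpa using h1t)] with y hy
    exact (key y hy).deriv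
  rw [hev.deriv_eq]
  -- now differentiate F at 1
  have h1t' : (1 : ℝ) - t ≠ 0 := sub_ne_zero.mpr h1t
  have hden : HasDerivAt (fun y : ℝ => y - t) 1 1 := by
    simpa using (hasDerivAt_id 1).sub_const t
  have hden2 : HasDerivAt (fun y : ℝ => (y - t) ^ 2) (2 * (1 - t)) 1 := by
    exact (hden.pow 2).congr_deriv (by simp)
  have hA : HasDerivAt (fun y : ℝ => (t ^ 2 - 1) / (y - t) ^ 2 * (P.eval y - c))
      ((- (t ^ 2 - 1) * (2 * (1 - t)) / ((1 - t) ^ 2) ^ 2) * (P.eval 1 - c)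
        + (t ^ 2 - 1) / (1 - t) ^ 2 * (derivative P).eval 1) 1 := by
    have hq : HasDerivAt (fun y : ℝ => (t ^ 2 - 1) / (y - t) ^ 2)
        (- (t ^ 2 - 1) * (2 * (1 - t)) / ((1 - t) ^ 2) ^ 2) 1 := by
      have := (hasDerivAt_const 1 (t ^ 2 - 1)).div hden2 (pow_ne_zero 2 h1t')
      refine this.congr_deriv ?_
      ring
    have hp : HasDerivAt (fun y : ℝ => P.eval y - c) ((derivative P).eval 1) 1 := by
      simpa using (P.hasDerivAt 1).sub_const c
    exact hq.mul hp
  have hB : HasDerivAt (fun y : ℝ => (1 - y * t) / (y - t) * (derivative P).eval y)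
      (((-t * (1 - t) - (1 - t)) / (1 - t) ^ 2) * (derivative P).eval 1
        + (1 - t) / (1 - t) * (derivative (derivative P)).eval 1) 1 := by
    have hnum : HasDerivAt (fun y : ℝ => 1 - y * t) (-t) 1 := by
      simpa using ((hasDerivAt_id 1).mul_const t).const_sub 1
    have hg : HasDerivAt (fun y : ℝ => (1 - y * t) / (y - t))
        ((-t * (1 - t) - (1 - 1 * t) * 1) / (1 - t) ^ 2) 1 := hnum.div hden h1t'
    have hp : HasDerivAt (fun y : ℝ => (derivative P).eval y)
        ((derivative (derivative P)).eval 1) 1 := (derivative P).hasDerivAt 1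
    have := hg.mul hp
    refine this.congr_deriv ?_
    rw [one_mul]
    ring
  have hFder : HasDerivAt F ((- (t ^ 2 - 1) * (2 * (1 - t)) / ((1 - t) ^ 2) ^ 2) * (P.eval 1 - c)
        + (t ^ 2 - 1) / (1 - t) ^ 2 * (derivative P).eval 1
        + (((-t * (1 - t) - (1 - t)) / (1 - t) ^ 2) * (derivative P).eval 1
        + (1 - t) / (1 - t) * (derivative (derivative P)).eval 1)) 1 := hA.add hB
  rw [hFder.deriv]
  have e1 : P.eval 1 = 1 := T_eval_one (n : ℤ)
  have e2 : (derivative P).eval 1 = (n : ℝ) ^ 2 := by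
    simpa using dT_eval_one (n : ℤ)
  have e3 : (derivative (derivative P)).eval 1 = (n : ℝ) ^ 2 * ((n : ℝ) ^ 2 - 1) / 3 := by
    simpa using ddT_eval_one (n : ℤ)
  rw [e1, e2, e3]
  have hc' : c = Tch n t := rfl
  field_simp
  ring
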